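/- Let d ≥ 1, δ > 0, θ ∈ ℝ^d. Let Z be a measurable space, ℓ : ℝ^d × Z → ℝ a bounded measurable loss such that θ ↦ ℓ(θ; z) is μ-Lipschitz for every z ∈ Z. Let Π be a probability measure on Z with Var_{Z∼Π}[ℓ(θ; Z)] ≥ σ² for some σ > 0, let Z₁, Z₂ be independent random variables each with law Π, and let u ∼ Unif(𝕊^{d−1}) be independent of (Z₁, Z₂). Then the two-point gradient estimator g := (d/δ)(ℓ(θ + δ u; Z₁) − ℓ(θ; Z₂)) u satisfies E‖g‖² ≥ (3/2)σ² d²/δ² − 3 μ² d². -/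

import Mathlib

open MeasureTheory Metric
open scoped ENNReal

/-- The uniform probability distribution on the unit sphere of `ℝ^d`. -/
noncomputable def unifSphere (d : ℕ) : Measure (sphere (0 : EuclideanSpace ℝ (Fin d)) 1) :=
  ((volume : Measure (EuclideanSpace ℝ (Fin d))).toSphere Set.univ)⁻¹ •
    (volume : Measure (EuclideanSpace ℝ (Fin d))).toSphere

lemma bdd_integrable {α : Type*} [MeasurableSpace α] (μ : Measure α) [IsFiniteMeasure μ]
    {g : α → ℝ} (hg : Measurable g) {C : ℝ} (h : ∀ x, |g x| ≤ C) : Integrable g μ := by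
  refine ⟨hg.aestronglyMeasurable, ?_⟩
  refine HasFiniteIntegral.of_bounded (C := C) (Filter.Eventually.of_forall ?_)
  simpa [Real.norm_eq_abs] using h

lemma unifSphere_isProb (d : ℕ) (hd : 1 ≤ d) : IsProbabilityMeasure (unifSphere d) := by
  haveI : NeZero ((volume : Measure (EuclideanSpace ℝ (Fin d))).toSphere) := by
    constructor
    intro h
    have h2 := (volume : Measure (EuclideanSpace ℝ (Fin d))).toSphere_apply_univ
    rw [h] at h2
    simp only [Measure.coe_zero, Pi.zero_apply] at h2
    have hb : (0:ℝ≥0∞) < volume (ball (0 : EuclideanSpace ℝ (Fin d)) 1) :=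
      measure_ball_pos _ _ one_pos
    have hdim : Module.finrank ℝ (EuclideanSpace ℝ (Fin d)) = d := by simp
    rw [hdim] at h2
    have hd0 : (d : ℝ≥0∞) ≠ 0 := by
      simpa using Nat.one_le_iff_ne_zero.mp hd
    exact hb.ne' (by
      rcases mul_eq_zero.mp h2.symm with h | h
      · exact absurd h hd0
      · exact h)
  exact isProbabilityMeasureSMul

/-- variance lower bound for the two-sample two-point estimator: with
`u ∼ Unif(𝕊^{d−1})` independent of i.i.d. `Z₁, Z₂ ∼ Π`, the estimator
`g = (d/δ)(ℓ(θ+δu;Z₁) − ℓ(θ;Z₂))u` satisfies `E‖g‖² ≥ (3/2)σ²d²/δ² − 3μ²d²`,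
whenever `Var_{Z∼Π}[ℓ(θ;Z)] ≥ σ²` and `ℓ` is `μ`-Lipschitz in `θ`. -/
theorem stmt15 (d : ℕ) (hd : 1 ≤ d) (δ : ℝ) (hδ : 0 < δ)
    (θ : EuclideanSpace ℝ (Fin d)) {Z : Type*} [MeasurableSpace Z]
    (ℓ : EuclideanSpace ℝ (Fin d) → Z → ℝ)
    (hℓmeas : Measurable (Function.uncurry ℓ))
    (hℓbdd : ∃ G : ℝ, ∀ θ' z, |ℓ θ' z| ≤ G)
    (μLip : ℝ) (hℓLip : ∀ (z : Z) (θ₁ θ₂ : EuclideanSpace ℝ (Fin d)),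
      |ℓ θ₁ z - ℓ θ₂ z| ≤ μLip * ‖θ₁ - θ₂‖)
    (PZ : Measure Z) [IsProbabilityMeasure PZ]
    (σ : ℝ) (hσ : 0 < σ)
    (hVar : σ ^ 2 ≤ ∫ z, (ℓ θ z - ∫ z', ℓ θ z' ∂PZ) ^ 2 ∂PZ) :
    (3 / 2) * σ ^ 2 * (d : ℝ) ^ 2 / δ ^ 2 - 3 * μLip ^ 2 * (d : ℝ) ^ 2 ≤
      ∫ p : (sphere (0 : EuclideanSpace ℝ (Fin d)) 1) × (Z × Z),
        ‖((d : ℝ) / δ) •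
          ((ℓ (θ + δ • (p.1 : EuclideanSpace ℝ (Fin d))) p.2.1 - ℓ θ p.2.2) •
            (p.1 : EuclideanSpace ℝ (Fin d)))‖ ^ 2
        ∂((unifSphere d).prod (PZ.prod PZ)) := by
  classical
  obtain ⟨G, hG⟩ := hℓbdd
  haveI := unifSphere_isProb d hd
  set c : ℝ := (d : ℝ) / δ with hc_def
  set m : ℝ := ∫ z', ℓ θ z' ∂PZ with hm_def
  -- basic measurability
  have hf : Measurable fun z => ℓ θ z :=
    hℓmeas.comp (measurable_const.prodMk measurable_id)
  have hfint : Integrable (fun z => ℓ θ z) PZ := bdd_integrable _ hf (fun z => hG θ z)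
  -- ∫ (ℓ θ z - m) = 0
  have hzero : ∫ z, (ℓ θ z - m) ∂PZ = 0 := by
    rw [integral_sub hfint (integrable_const m)]
    simp [hm_def]
  set V : ℝ := ∫ z, (ℓ θ z - m) ^ 2 ∂PZ with hV_def
  -- integrability of centered square
  have hfm_meas : Measurable fun z => (ℓ θ z - m) ^ 2 := (hf.sub measurable_const).pow_const 2
  have hfm_bd : ∀ z, |(ℓ θ z - m) ^ 2| ≤ (G + |m|) ^ 2 := by
    intro z
    have h1 : |ℓ θ z - m| ≤ G + |m| :=
      (abs_sub _ _).trans (add_le_add (hG θ z) le_rfl)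
    calc |(ℓ θ z - m) ^ 2| = |ℓ θ z - m| ^ 2 := by rw [abs_pow]
      _ ≤ (G + |m|) ^ 2 := by
          exact pow_le_pow_left₀ (abs_nonneg _) h1 2
  have hfmint : Integrable (fun z => (ℓ θ z - m) ^ 2) PZ := bdd_integrable _ hfm_meas hfm_bd
  have hfmint1 : Integrable (fun z => ℓ θ z - m) PZ := hfint.sub (integrable_const m)
  -- key variance identity on the product
  have hq_meas : Measurable fun q : Z × Z => (ℓ θ q.1 - ℓ θ q.2) ^ 2 :=
    ((hf.comp measurable_fst).sub (hf.comp measurable_snd)).pow_const 2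
  have hq_bd : ∀ q : Z × Z, |(ℓ θ q.1 - ℓ θ q.2) ^ 2| ≤ (2 * G) ^ 2 := by
    intro q
    have h1 : |ℓ θ q.1 - ℓ θ q.2| ≤ 2 * G := by
      calc |ℓ θ q.1 - ℓ θ q.2| ≤ |ℓ θ q.1| + |ℓ θ q.2| := abs_sub _ _
        _ ≤ 2 * G := by have := hG θ q.1; have := hG θ q.2; linarith
    calc |(ℓ θ q.1 - ℓ θ q.2) ^ 2| = |ℓ θ q.1 - ℓ θ q.2| ^ 2 := by rw [abs_pow]
      _ ≤ (2 * G) ^ 2 := pow_le_pow_left₀ (abs_nonneg _) h1 2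
  have hqint : Integrable (fun q : Z × Z => (ℓ θ q.1 - ℓ θ q.2) ^ 2) (PZ.prod PZ) :=
    bdd_integrable _ hq_meas hq_bd
  have hkey : ∫ q : Z × Z, (ℓ θ q.1 - ℓ θ q.2) ^ 2 ∂(PZ.prod PZ) = 2 * V := by
    rw [integral_prod _ hqint]
    have hinner : ∀ z₁, ∫ z₂, (ℓ θ z₁ - ℓ θ z₂) ^ 2 ∂PZ = (ℓ θ z₁ - m) ^ 2 + V := by
      intro z₁
      have hrew : (fun z₂ => (ℓ θ z₁ - ℓ θ z₂) ^ 2) =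
          fun z₂ => (ℓ θ z₁ - m) ^ 2 + ((ℓ θ z₂ - m) ^ 2 - (2 * (ℓ θ z₁ - m)) * (ℓ θ z₂ - m)) := by
        funext z₂; ring
      have h2 : Integrable
          (fun z₂ => (ℓ θ z₂ - m) ^ 2 - (2 * (ℓ θ z₁ - m)) * (ℓ θ z₂ - m)) PZ :=
        hfmint.sub (hfmint1.const_mul _)
      have h3 : Integrable (fun z₂ => (2 * (ℓ θ z₁ - m)) * (ℓ θ z₂ - m)) PZ :=
        hfmint1.const_mul _
      rw [hrew, integral_add (integrable_const _) h2,
        integral_const, integral_sub hfmint h3, integral_const_mul, hzero]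
      simp [hV_def]
    calc ∫ z₁, ∫ z₂, (ℓ θ z₁ - ℓ θ z₂) ^ 2 ∂PZ ∂PZ
        = ∫ z₁, ((ℓ θ z₁ - m) ^ 2 + V) ∂PZ := by
          exact integral_congr_ae (Filter.Eventually.of_forall hinner)
      _ = 2 * V := by
          rw [integral_add hfmint (integrable_const V), integral_const]
          simp [hV_def]; ring
  -- measurability on the big space
  have hcoe : Measurable fun p : (sphere (0 : EuclideanSpace ℝ (Fin d)) 1) × Z × Z => (p.1 : EuclideanSpace ℝ (Fin d)) :=
    continuous_subtype_val.measurable.comp measurable_fst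
  have hA : Measurable fun p : (sphere (0 : EuclideanSpace ℝ (Fin d)) 1) × Z × Z => ℓ (θ + δ • (p.1 : EuclideanSpace ℝ (Fin d))) p.2.1 :=
    hℓmeas.comp ((measurable_const.add (hcoe.const_smul δ)).prodMk
      (measurable_fst.comp measurable_snd))
  have hB : Measurable fun p : (sphere (0 : EuclideanSpace ℝ (Fin d)) 1) × Z × Z => ℓ θ p.2.2 :=
    hℓmeas.comp (measurable_const.prodMk (measurable_snd.comp measurable_snd))
  have hB1 : Measurable fun p : (sphere (0 : EuclideanSpace ℝ (Fin d)) 1) × Z × Z => ℓ θ p.2.1 :=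
    hℓmeas.comp (measurable_const.prodMk (measurable_fst.comp measurable_snd))
  -- upper integrand
  set U : (sphere (0 : EuclideanSpace ℝ (Fin d)) 1) × Z × Z → ℝ := fun p => c ^ 2 * (ℓ (θ + δ • (p.1 : EuclideanSpace ℝ (Fin d))) p.2.1 - ℓ θ p.2.2) ^ 2
    with hU_def
  set L : (sphere (0 : EuclideanSpace ℝ (Fin d)) 1) × Z × Z → ℝ :=
    fun p => (3 / 4) * c ^ 2 * (ℓ θ p.2.1 - ℓ θ p.2.2) ^ 2 - 3 * μLip ^ 2 * (d : ℝ) ^ 2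
    with hL_def
  have hUmeas : Measurable U := measurable_const.mul ((hA.sub hB).pow_const 2)
  have hLmeas : Measurable L :=
    (measurable_const.mul ((hB1.sub hB).pow_const 2)).sub measurable_const
  have hdiff_bd : ∀ (θ' : EuclideanSpace ℝ (Fin d)) (z₁ z₂ : Z), |ℓ θ' z₁ - ℓ θ z₂| ≤ 2 * G := by
    intro θ' z₁ z₂
    calc |ℓ θ' z₁ - ℓ θ z₂| ≤ |ℓ θ' z₁| + |ℓ θ z₂| := abs_sub _ _
      _ ≤ 2 * G := by have := hG θ' z₁; have := hG θ z₂; linarith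
  have hUbd : ∀ p, |U p| ≤ c ^ 2 * (2 * G) ^ 2 := by
    intro p
    rw [hU_def, abs_mul, abs_of_nonneg (sq_nonneg c)]
    refine mul_le_mul_of_nonneg_left ?_ (sq_nonneg c)
    calc |(ℓ (θ + δ • (p.1 : EuclideanSpace ℝ (Fin d))) p.2.1 - ℓ θ p.2.2) ^ 2|
        = |ℓ (θ + δ • (p.1 : EuclideanSpace ℝ (Fin d))) p.2.1 - ℓ θ p.2.2| ^ 2 := by rw [abs_pow]
      _ ≤ (2 * G) ^ 2 := pow_le_pow_left₀ (abs_nonneg _) (hdiff_bd _ _ _) 2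
  have hLbd : ∀ p, |L p| ≤ (3 / 4) * c ^ 2 * (2 * G) ^ 2 + |3 * μLip ^ 2 * (d : ℝ) ^ 2| := by
    intro p
    rw [hL_def]
    refine (abs_sub _ _).trans (add_le_add ?_ le_rfl)
    rw [abs_mul, abs_of_nonneg (by positivity : (0:ℝ) ≤ (3/4) * c ^ 2)]
    refine mul_le_mul_of_nonneg_left ?_ (by positivity)
    calc |(ℓ θ p.2.1 - ℓ θ p.2.2) ^ 2| = |ℓ θ p.2.1 - ℓ θ p.2.2| ^ 2 := by rw [abs_pow]
      _ ≤ (2 * G) ^ 2 := pow_le_pow_left₀ (abs_nonneg _) (hdiff_bd _ _ _) 2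
  have hUint : Integrable U ((unifSphere d).prod (PZ.prod PZ)) := bdd_integrable _ hUmeas hUbd
  have hLint : Integrable L ((unifSphere d).prod (PZ.prod PZ)) := bdd_integrable _ hLmeas hLbd
  -- pointwise inequality L ≤ U
  have hpt : ∀ p : (sphere (0 : EuclideanSpace ℝ (Fin d)) 1) × Z × Z, L p ≤ U p := by
    intro p
    simp only [hL_def, hU_def]
    have hb := hℓLip p.2.1 (θ + δ • (p.1 : EuclideanSpace ℝ (Fin d))) θ
    have hnorm : ‖θ + δ • (p.1 : EuclideanSpace ℝ (Fin d)) - θ‖ = δ := by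
      have : θ + δ • (p.1 : EuclideanSpace ℝ (Fin d)) - θ = δ • (p.1 : EuclideanSpace ℝ (Fin d)) := by abel
      rw [this, norm_smul]
      simp [abs_of_pos hδ]
    rw [hnorm] at hb
    set a : ℝ := ℓ θ p.2.1 - ℓ θ p.2.2 with ha_def
    set b : ℝ := ℓ (θ + δ • (p.1 : EuclideanSpace ℝ (Fin d))) p.2.1 - ℓ θ p.2.1 with hb_def
    have hab : ℓ (θ + δ • (p.1 : EuclideanSpace ℝ (Fin d))) p.2.1 - ℓ θ p.2.2 = a + b := by
      rw [ha_def, hb_def]; ring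
    rw [hab]
    have h1 : b ^ 2 ≤ (μLip * δ) ^ 2 := by
      calc b ^ 2 = |b| ^ 2 := (sq_abs b).symm
        _ ≤ (μLip * δ) ^ 2 := pow_le_pow_left₀ (abs_nonneg _) hb 2
    have h2 : c ^ 2 * b ^ 2 ≤ c ^ 2 * (μLip * δ) ^ 2 :=
      mul_le_mul_of_nonneg_left h1 (sq_nonneg c)
    have hc2 : c ^ 2 * (μLip * δ) ^ 2 = μLip ^ 2 * (d : ℝ) ^ 2 := by
      rw [hc_def]; field_simp
    have hexp : c ^ 2 * (a + b) ^ 2 - 3 / 4 * c ^ 2 * a ^ 2 + 3 * (c ^ 2 * b ^ 2) =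
        (1 / 4) * (c ^ 2 * (a + 4 * b) ^ 2) := by ring
    have hpos : 0 ≤ c ^ 2 * (a + 4 * b) ^ 2 := mul_nonneg (sq_nonneg c) (sq_nonneg (a + 4 * b))
    clear_value a b c
    nlinarith [h2, hc2, hexp, hpos]
  -- rewrite the goal integrand as U
  have hEq : (∫ p : (sphere (0 : EuclideanSpace ℝ (Fin d)) 1) × Z × Z,
        ‖((d : ℝ) / δ) • ((ℓ (θ + δ • (p.1 : EuclideanSpace ℝ (Fin d))) p.2.1 - ℓ θ p.2.2) • (p.1 : EuclideanSpace ℝ (Fin d)))‖ ^ 2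
        ∂((unifSphere d).prod (PZ.prod PZ))) = ∫ p, U p ∂((unifSphere d).prod (PZ.prod PZ)) := by
    refine integral_congr_ae (Filter.Eventually.of_forall fun p => ?_)
    simp only [hU_def, hc_def]
    rw [norm_smul, norm_smul, norm_eq_of_mem_sphere p.1]
    rw [mul_one, mul_pow, Real.norm_eq_abs, Real.norm_eq_abs, sq_abs, sq_abs]
  -- compute ∫ L
  have hLcalc : ∫ p, L p ∂((unifSphere d).prod (PZ.prod PZ)) =
      (3 / 4) * c ^ 2 * (2 * V) - 3 * μLip ^ 2 * (d : ℝ) ^ 2 := by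
    rw [integral_prod _ hLint]
    have hinner : ∀ u : sphere (0 : EuclideanSpace ℝ (Fin d)) 1, (∫ q : Z × Z, L (u, q) ∂(PZ.prod PZ)) =
        (3 / 4) * c ^ 2 * (2 * V) - 3 * μLip ^ 2 * (d : ℝ) ^ 2 := by
      intro u
      rw [hL_def]
      rw [integral_sub (hqint.const_mul _) (integrable_const _), integral_const_mul,
        integral_const, hkey]
      simp
    rw [integral_congr_ae (Filter.Eventually.of_forall hinner), integral_const]
    simp
  have hmono := integral_mono hLint hUint hpt
  rw [hEq]
  refine le_trans ?_ hmono
  rw [hLcalc]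
  have hVσ : σ ^ 2 ≤ V := hVar
  have hcval : (3 / 2) * σ ^ 2 * (d : ℝ) ^ 2 / δ ^ 2 = (3 / 4) * c ^ 2 * (2 * σ ^ 2) := by
    rw [hc_def]; field_simp; ring
  rw [hcval]
  have : (3 / 4) * c ^ 2 * (2 * σ ^ 2) ≤ (3 / 4) * c ^ 2 * (2 * V) := by
    refine mul_le_mul_of_nonneg_left (by linarith) (by positivity)
  linarith
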